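/- For every nonzero integer k and real 0 < r < 1, the integral over [0, 2π] of e^{iky}·log((1+r²)/(1−r²) − cos(y)) dy equals −(2π/|k|)·((1−r)/(1+r))^{|k|}. -/

import Mathlib

open Real Complex MeasureTheory

set_option maxHeartbeats 1000000
open Real Complex MeasureTheory
lemma integral_exp_int (m : ℤ) :
    ∫ y in (0:ℝ)..(2 * π), Complex.exp (Complex.I * m * y)
      = if m = 0 then (2 * π : ℂ) else 0 := by
  rcases eq_or_ne m 0 with rfl | hm
  · simp
  · rw [if_neg hm]
    have hc : (Complex.I * m : ℂ) ≠ 0 := by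
      simp [Complex.I_ne_zero, Complex.ext_iff, hm]
    have := integral_exp_mul_complex (a := 0) (b := 2 * π) hc
    simp only [Complex.ofReal_mul, Complex.ofReal_ofNat] at this
    rw [this]
    have h1 : Complex.exp (Complex.I * m * (2 * π)) = 1 := by
      rw [← Complex.exp_int_mul_two_pi_mul_I m]
      congr 1
      ring
    simp [h1]

lemma integral_exp_cos (k : ℤ) (hk : k ≠ 0) (n : ℕ) (hn : 1 ≤ n) :
    ∫ y in (0:ℝ)..(2 * π), Complex.exp (Complex.I * k * y) * (Real.cos (n * y) : ℂ)
      = if n = k.natAbs then (π : ℂ) else 0 := by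
  have hpt : ∀ y : ℝ, Complex.exp (Complex.I * k * y) * (Real.cos (n * y) : ℂ)
      = (Complex.exp (Complex.I * (k + n) * y) + Complex.exp (Complex.I * (k - n) * y)) / 2 := by
    intro y
    rw [Complex.ofReal_cos]
    push_cast
    rw [Complex.cos]
    rw [show Complex.exp (Complex.I * k * y) * ((Complex.exp (n * y * Complex.I) + Complex.exp (-(n * y) * Complex.I)) / 2) = (Complex.exp (Complex.I * k * y) * Complex.exp (n * y * Complex.I) + Complex.exp (Complex.I * k * y) * Complex.exp (-(n * y) * Complex.I)) / 2 by ring]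
    rw [← Complex.exp_add, ← Complex.exp_add]
    ring_nf
  simp_rw [hpt]
  rw [intervalIntegral.integral_div, intervalIntegral.integral_add
      (by apply Continuous.intervalIntegrable; continuity)
      (by apply Continuous.intervalIntegrable; continuity)]
  have h1 := integral_exp_int (k + n)
  have h2 := integral_exp_int (k - n)
  push_cast at h1 h2
  rw [h1, h2]
  rcases lt_or_gt_of_ne hk with hneg | hpos
  · rcases eq_or_ne (n : ℤ) (-k) with he | he
    · have : n = k.natAbs := by omega
      rw [if_pos this, if_pos (by omega), if_neg (by omega)]
      push_cast
      ring
    · rw [if_neg (by omega), if_neg (by omega), if_neg (by omega)]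
      norm_num
  · rcases eq_or_ne (n : ℤ) k with he | he
    · have : n = k.natAbs := by omega
      rw [if_pos this, if_neg (by omega), if_pos (by omega)]
      push_cast
      ring
    · rw [if_neg (by omega), if_neg (by omega), if_neg (by omega)]
      norm_num

lemma hasSum_log_poisson {ρ : ℝ} (h0 : 0 < ρ) (h1 : ρ < 1) (y : ℝ) :
    HasSum (fun n : ℕ => -(2 * ρ ^ n / n) * Real.cos (n * y))
      (Real.log (1 - 2 * ρ * Real.cos y + ρ ^ 2)) := by
  set z : ℂ := ρ * Complex.exp (Complex.I * y) with hz
  have hnz : ‖z‖ < 1 := by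
    have he : ‖Complex.exp (Complex.I * y)‖ = 1 := by
      simp [Complex.norm_exp]
    rw [hz]
    simp only [norm_mul, he, mul_one, Complex.norm_real, Real.norm_eq_abs,
      abs_of_pos h0]
    exact h1
  have hS := Complex.hasSum_taylorSeries_neg_log hnz
  have hre := (Complex.reCLM.hasSum hS)
  have hzn : ∀ n : ℕ, (Complex.reCLM (z ^ n / n : ℂ)) = ρ ^ n * Real.cos (n * y) / n := by
    intro n
    show ((z ^ n / n : ℂ)).re = _
    rw [hz, mul_pow, ← Complex.exp_nat_mul, Complex.div_natCast_re]
    congr 1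
    rw [show ((n : ℂ) * (Complex.I * y)) = (n * y : ℝ) * Complex.I by push_cast; ring]
    rw [Complex.exp_mul_I, ← Complex.ofReal_cos, ← Complex.ofReal_sin, ← Complex.ofReal_pow]
    simp only [Complex.mul_re, Complex.add_re, Complex.add_im, Complex.mul_im,
      Complex.ofReal_re, Complex.ofReal_im, Complex.I_re, Complex.I_im]
    ring
  simp_rw [hzn] at hre
  have hzne : (1 : ℂ) - z ≠ 0 := by
    intro h
    rw [sub_eq_zero] at h
    rw [← h] at hnz
    simp at hnz
  have habs : ‖1 - z‖ ^ 2 = 1 - 2 * ρ * Real.cos y + ρ ^ 2 := by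
    rw [← Complex.normSq_eq_norm_sq, Complex.normSq_apply]
    rw [hz, show Complex.I * (y:ℂ) = (y:ℂ) * Complex.I by ring,
      Complex.exp_mul_I, ← Complex.ofReal_cos, ← Complex.ofReal_sin]
    simp only [Complex.sub_re, Complex.sub_im, Complex.one_re, Complex.one_im,
      Complex.mul_re, Complex.mul_im, Complex.add_re, Complex.add_im,
      Complex.ofReal_re, Complex.ofReal_im, Complex.I_re, Complex.I_im]
    nlinarith [Real.sin_sq_add_cos_sq y]
  have hlog : Complex.reCLM (-Complex.log (1 - z))
      = -(Real.log (1 - 2 * ρ * Real.cos y + ρ ^ 2)) / 2 := by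
    show (-Complex.log (1 - z)).re = _
    rw [Complex.neg_re, Complex.log_re, ← habs, Real.log_pow]
    push_cast
    ring
  rw [hlog] at hre
  have h2 := hre.mul_left (-2)
  have hval : (-2 : ℝ) * (-(Real.log (1 - 2 * ρ * Real.cos y + ρ ^ 2)) / 2)
      = Real.log (1 - 2 * ρ * Real.cos y + ρ ^ 2) := by ring
  rw [hval] at h2
  have hfun : (fun n : ℕ => -(2 * ρ ^ n / n) * Real.cos (n * y))
      = fun n : ℕ => (-2 : ℝ) * (ρ ^ n * Real.cos (n * y) / n) := by
    funext n; ring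
  rw [hfun]
  exact h2


lemma key_integral {ρ : ℝ} (h0 : 0 < ρ) (h1 : ρ < 1) (k : ℤ) (hk : k ≠ 0) :
    ∫ y in (0:ℝ)..(2 * π),
      Complex.exp (Complex.I * k * y) * ((Real.log (1 - 2 * ρ * Real.cos y + ρ ^ 2) : ℝ) : ℂ)
      = ((-(2 * π / (k.natAbs : ℝ)) * ρ ^ k.natAbs : ℝ) : ℂ) := by
  set F : ℕ → ℝ → ℂ := fun n y =>
    Complex.exp (Complex.I * k * y) * ((-(2 * ρ ^ n / n) * Real.cos (n * y) : ℝ) : ℂ) with hF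
  have hcont : ∀ n, Continuous (F n) := by
    intro n
    apply Continuous.mul
    · exact Complex.continuous_exp.comp (by continuity)
    · exact Complex.continuous_ofReal.comp (by continuity)
  have hsum_pt : ∀ y : ℝ, HasSum (F · y)
      (Complex.exp (Complex.I * k * y) * ((Real.log (1 - 2 * ρ * Real.cos y + ρ ^ 2) : ℝ) : ℂ)) := by
    intro y
    have := (Complex.ofRealCLM.hasSum (hasSum_log_poisson h0 h1 y)).mul_left
      (Complex.exp (Complex.I * k * y))
    exact this
  have hFnorm : ∀ n y, ‖F n y‖ ≤ 2 * ρ ^ n := by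
    intro n y
    rw [hF]
    simp only [norm_mul, Complex.norm_exp, Complex.norm_real]
    have h1' : (Complex.I * k * y).re = 0 := by simp
    rw [h1', Real.exp_zero, one_mul]
    rw [Real.norm_eq_abs, Real.norm_eq_abs]
    have hc : |Real.cos (n * y)| ≤ 1 := Real.abs_cos_le_one _
    have h2' : |(-(2 * ρ ^ n / n))| ≤ 2 * ρ ^ n := by
      rw [abs_neg, abs_div, Nat.abs_cast]
      rcases Nat.eq_zero_or_pos n with rfl | hn
      · simp
      · rw [_root_.abs_of_nonneg (by positivity : (0:ℝ) ≤ 2 * ρ ^ n)]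
        rw [div_le_iff₀ (by positivity)]
        nlinarith [pow_nonneg h0.le n, (by exact_mod_cast hn : (1:ℝ) ≤ n)]
    calc |(-(2 * ρ ^ n / n))| * |Real.cos (n * y)| ≤ (2 * ρ ^ n) * 1 := by
          apply mul_le_mul h2' hc (abs_nonneg _) (by positivity)
      _ = 2 * ρ ^ n := by ring
  have hInt : ∀ n, IntegrableOn (F n) (Set.Ioc 0 (2 * π)) volume := fun n =>
    (hcont n).integrableOn_Ioc
  have hIntNorm : Summable fun n => ∫ y in Set.Ioc 0 (2 * π), ‖F n y‖ := by
    refine Summable.of_nonneg_of_le (fun n => integral_nonneg fun y => norm_nonneg _)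
      (fun n => ?_) (((summable_geometric_of_lt_one h0.le h1).mul_left 2).mul_left (2 * π))
    · calc ∫ y in Set.Ioc 0 (2 * π), ‖F n y‖
          ≤ ∫ _y in Set.Ioc 0 (2 * π), (2 * ρ ^ n) := by
            apply setIntegral_mono_on (hInt n).norm (integrableOn_const (by simp [ENNReal.mul_eq_top]))
              measurableSet_Ioc
            exact fun y _ => hFnorm n y
        _ = (2 * π) * (2 * ρ ^ n) := by
            rw [setIntegral_const]
            simp [Real.volume_Ioc, ENNReal.toReal_ofReal Real.two_pi_pos.le, Real.pi_pos.le]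
  have hswap := integral_tsum_of_summable_integral_norm (μ := volume.restrict (Set.Ioc 0 (2*π)))
    hInt hIntNorm
  have htsum_fun : ∀ y : ℝ, ∑' n, F n y
      = Complex.exp (Complex.I * k * y) * ((Real.log (1 - 2 * ρ * Real.cos y + ρ ^ 2) : ℝ) : ℂ) :=
    fun y => (hsum_pt y).tsum_eq
  -- compute each integral
  have hInt_n : ∀ n : ℕ, (∫ y in Set.Ioc 0 (2 * π), F n y)
      = if n = k.natAbs then ((-(2 * ρ ^ n / n) : ℝ) : ℂ) * π else 0 := by
    intro n
    rw [← intervalIntegral.integral_of_le Real.two_pi_pos.le]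
    rcases Nat.eq_zero_or_pos n with rfl | hn
    · rw [if_neg (by omega : (0:ℕ) ≠ k.natAbs)]
      simp [hF]
    · have : ∀ y : ℝ, F n y = ((-(2 * ρ ^ n / n) : ℝ) : ℂ) *
          (Complex.exp (Complex.I * k * y) * (Real.cos (n * y) : ℂ)) := by
        intro y
        rw [hF]
        push_cast
        ring
      simp_rw [this]
      rw [intervalIntegral.integral_const_mul, integral_exp_cos k hk n hn]
      split_ifs <;> simp
  rw [intervalIntegral.integral_of_le Real.two_pi_pos.le]
  calc (∫ y in Set.Ioc 0 (2 * π),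
        Complex.exp (Complex.I * k * y) * ((Real.log (1 - 2 * ρ * Real.cos y + ρ ^ 2) : ℝ) : ℂ))
      = ∫ y in Set.Ioc 0 (2 * π), ∑' n, F n y := by
        apply setIntegral_congr_fun measurableSet_Ioc
        intro y _
        exact (htsum_fun y).symm
    _ = ∑' n, ∫ y in Set.Ioc 0 (2 * π), F n y := hswap.symm
    _ = ((-(2 * π / (k.natAbs : ℝ)) * ρ ^ k.natAbs : ℝ) : ℂ) := by
        rw [tsum_eq_single k.natAbs (fun n hne => by rw [hInt_n n, if_neg hne])]
        rw [hInt_n, if_pos rfl]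
        have hknz : (k.natAbs : ℝ) ≠ 0 := by
          simp [Int.natAbs_ne_zero.mpr hk, hk]
        push_cast
        field_simp

theorem integral_exp_log_kernel (r : ℝ) (hr0 : 0 < r) (hr1 : r < 1) (k : ℤ) (hk : k ≠ 0) :
    ∫ y in (0:ℝ)..(2 * π),
      Complex.exp (Complex.I * k * y) *
        ((Real.log ((1 + r ^ 2) / (1 - r ^ 2) - Real.cos y) : ℝ) : ℂ)
      = ((-(2 * π / (k.natAbs : ℝ)) * ((1 - r) / (1 + r)) ^ k.natAbs : ℝ) : ℂ) := by
  set ρ : ℝ := (1 - r) / (1 + r) with hρ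
  have hρ0 : 0 < ρ := by
    apply div_pos <;> linarith
  have hρ1 : ρ < 1 := by
    rw [hρ, div_lt_one (by linarith)]
    linarith
  have hP : ∀ y : ℝ, 0 < 1 - 2 * ρ * Real.cos y + ρ ^ 2 := by
    intro y
    nlinarith [Real.neg_one_le_cos y, Real.cos_le_one y, sq_nonneg (1 - ρ)]
  -- pointwise identity for the log
  have hpt : ∀ y : ℝ,
      Real.log ((1 + r ^ 2) / (1 - r ^ 2) - Real.cos y)
      = Real.log (1 - 2 * ρ * Real.cos y + ρ ^ 2) - Real.log (2 * ρ) := by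
    intro y
    have harg : (1 + r ^ 2) / (1 - r ^ 2) - Real.cos y
        = (1 - 2 * ρ * Real.cos y + ρ ^ 2) / (2 * ρ) := by
      rw [hρ, show (1 - r ^ 2 : ℝ) = (1 + r) * (1 - r) by ring]
      have h2 : (1 + r : ℝ) ≠ 0 := by positivity
      have h3 : (1 - r : ℝ) ≠ 0 := by linarith
      field_simp
      ring
    rw [harg, Real.log_div (hP y).ne' (by positivity)]
  simp_rw [hpt]
  have hc1 : Continuous fun y : ℝ =>
      Complex.exp (Complex.I * k * y) * ((Real.log (1 - 2 * ρ * Real.cos y + ρ ^ 2) : ℝ) : ℂ) := by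
    apply Continuous.mul
    · exact Complex.continuous_exp.comp (by continuity)
    · apply Complex.continuous_ofReal.comp
      exact (by continuity : Continuous fun y : ℝ => 1 - 2 * ρ * Real.cos y + ρ ^ 2).log
        (fun y => (hP y).ne')
  have hsplit : ∀ y : ℝ,
      Complex.exp (Complex.I * k * y) *
        ((Real.log (1 - 2 * ρ * Real.cos y + ρ ^ 2) - Real.log (2 * ρ) : ℝ) : ℂ)
      = Complex.exp (Complex.I * k * y) * ((Real.log (1 - 2 * ρ * Real.cos y + ρ ^ 2) : ℝ) : ℂ)
        - ((Real.log (2 * ρ) : ℝ) : ℂ) * Complex.exp (Complex.I * k * y) := by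
    intro y
    push_cast
    ring
  simp_rw [hsplit]
  rw [intervalIntegral.integral_sub (hc1.intervalIntegrable 0 (2 * π))
    (((by fun_prop : Continuous fun y : ℝ =>
      ((Real.log (2 * ρ) : ℝ) : ℂ) * Complex.exp (Complex.I * k * y)).intervalIntegrable
        0 (2 * π)))]
  rw [intervalIntegral.integral_const_mul, integral_exp_int k, if_neg hk, mul_zero, sub_zero]
  exact key_integral hρ0 hρ1 k hk
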